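/- Let s, l be positive integers. For every matrix X ∈ M_{s×l}(ℤ) all of whose rows sum to 0 (i.e. X·𝟙 = 0 for the all-ones vector 𝟙 ∈ ℤ^l), there exist Q ∈ GL_s(ℤ) and P ∈ GL_l(ℤ) such that P·𝟙 = 𝟙, the first row of P is (1,0,…,0), and the matrix Q·X·P⁻¹ is in homogeneous Smith normal form. -/

import Mathlib

open Matrix

/-- A matrix `A ∈ M_{s×l}(ℤ)` is in Smith normal form: it is diagonal, and there is `r`
such that the first `r` diagonal entries are positive, the remaining ones vanish, and
consecutive diagonal entries divide each other. -/
def IsSNF {s l : ℕ} (A : Matrix (Fin s) (Fin l) ℤ) : Prop :=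
  (∀ (i : Fin s) (j : Fin l), (i : ℕ) ≠ (j : ℕ) → A i j = 0) ∧
  ∃ r : ℕ,
    (∀ (i : Fin s) (j : Fin l), (i : ℕ) = (j : ℕ) →
      ((i : ℕ) < r → 0 < A i j) ∧ (r ≤ (i : ℕ) → A i j = 0)) ∧
    (∀ (i i' : Fin s) (j j' : Fin l), (i : ℕ) = (j : ℕ) → (i' : ℕ) = (j' : ℕ) →
      (i : ℕ) + 1 = (i' : ℕ) → A i j ∣ A i' j')

/-- The matrix obtained from `A` by erasing its first column. -/
def eraseFirstCol {s l : ℕ} (A : Matrix (Fin s) (Fin l) ℤ) :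
    Matrix (Fin s) (Fin (l - 1)) ℤ :=
  Matrix.of fun i j => A i ⟨(j : ℕ) + 1, by have := j.isLt; omega⟩

/-- A matrix `A` with `A·𝟙 = 0` is in homogeneous Smith normal form if the matrix obtained
from `A` by erasing its first column is in Smith normal form. -/
def IsHSNF {s l : ℕ} (A : Matrix (Fin s) (Fin l) ℤ) : Prop :=
  A *ᵥ 1 = 0 ∧ IsSNF (eraseFirstCol A)


variable {s l m k : ℕ}

/-- Two matrices are equivalent if related by invertible row/column transformations. -/
def SNFEquiv {s l : ℕ} (A B : Matrix (Fin s) (Fin l) ℤ) : Prop :=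
  ∃ (Q : (Matrix (Fin s) (Fin s) ℤ)ˣ) (P : (Matrix (Fin l) (Fin l) ℤ)ˣ),
    B = (Q : Matrix (Fin s) (Fin s) ℤ) * A * (P : Matrix (Fin l) (Fin l) ℤ)

theorem SNFEquiv.refl (A : Matrix (Fin s) (Fin l) ℤ) : SNFEquiv A A :=
  ⟨1, 1, by simp⟩

theorem SNFEquiv.trans {A B C : Matrix (Fin s) (Fin l) ℤ}
    (h1 : SNFEquiv A B) (h2 : SNFEquiv B C) : SNFEquiv A C := by
  obtain ⟨Q1, P1, rfl⟩ := h1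
  obtain ⟨Q2, P2, rfl⟩ := h2
  exact ⟨Q2 * Q1, P1 * P2, by simp [Matrix.mul_assoc]⟩

/-- permutation matrix acting on rows from the left. -/
def permL (σ : Equiv.Perm (Fin m)) : Matrix (Fin m) (Fin m) ℤ :=
  Matrix.of fun i j => if j = σ i then 1 else 0

theorem permL_mul (σ : Equiv.Perm (Fin m)) (A : Matrix (Fin m) (Fin l) ℤ) :
    permL σ * A = Matrix.of fun i j => A (σ i) j := by
  ext i j
  simp [permL, Matrix.mul_apply]

theorem permL_mul_permL (σ τ : Equiv.Perm (Fin m)) :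
    permL σ * permL τ = permL (τ * σ) := by
  rw [permL_mul]; ext i j; simp [permL]; congr

theorem permL_inv (σ : Equiv.Perm (Fin m)) : permL σ * permL σ⁻¹ = 1 := by
  rw [permL_mul_permL]; ext i j
  simp [permL, Matrix.one_apply, eq_comm]

/-- permutation matrix acting on columns from the right. -/
def permR (τ : Equiv.Perm (Fin m)) : Matrix (Fin m) (Fin m) ℤ :=
  Matrix.of fun i j => if i = τ j then 1 else 0

theorem mul_permR (τ : Equiv.Perm (Fin m)) (A : Matrix (Fin s) (Fin m) ℤ) :
    A * permR τ = Matrix.of fun i j => A i (τ j) := by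
  ext i j
  simp [permR, Matrix.mul_apply]

theorem permR_mul_permR (σ τ : Equiv.Perm (Fin m)) :
    permR σ * permR τ = permR (σ * τ) := by
  rw [mul_permR]; ext i j; simp [permR]; congr

theorem permR_inv (τ : Equiv.Perm (Fin m)) : permR τ * permR τ⁻¹ = 1 := by
  rw [permR_mul_permR]; ext i j
  simp [permR, Matrix.one_apply]

theorem snfEquiv_submatrix (A : Matrix (Fin s) (Fin l) ℤ)
    (σ : Equiv.Perm (Fin s)) (τ : Equiv.Perm (Fin l)) :
    SNFEquiv A (A.submatrix σ τ) := by
  refine ⟨⟨permL σ, permL σ⁻¹, permL_inv σ, by simpa using permL_inv σ⁻¹⟩,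
    ⟨permR τ, permR τ⁻¹, permR_inv τ, by simpa using permR_inv τ⁻¹⟩, ?_⟩
  show A.submatrix σ τ = permL σ * A * permR τ
  rw [permL_mul, mul_permR]
  ext i j; rfl

variable {s l m : ℕ}

/-- `addMat i0 w`: identity plus the row `w` placed at row `i0`. -/
def addMat (i0 : Fin m) (w : Fin m → ℤ) : Matrix (Fin m) (Fin m) ℤ :=
  Matrix.of fun i j => (if i = j then 1 else 0) + (if i = i0 then w j else 0)

theorem addMat_mul_addMat (i0 : Fin m) (w : Fin m → ℤ) (hw : w i0 = 0) (v : Fin m → ℤ) :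
    addMat i0 w * addMat i0 v = addMat i0 (w + v) := by
  ext i j
  simp only [addMat, Matrix.mul_apply, Matrix.of_apply, add_mul, mul_add,
    ite_mul, mul_ite, one_mul, mul_one, zero_mul, mul_zero, Finset.sum_add_distrib]
  rw [Finset.sum_ite_eq' Finset.univ j
      (fun x => (if i = x then (1:ℤ) else 0) + if i = i0 then w x else 0),
    Finset.sum_ite_eq' Finset.univ i0
      (fun x => (if i = x then v j else 0) + if i = i0 then w x * v j else 0)]
  simp only [Finset.mem_univ, if_true, Pi.add_apply]
  by_cases hi : i = i0 <;> simp [hi, hw] <;> ring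

theorem addMat_one (i0 : Fin m) : addMat i0 0 = 1 := by
  ext i j; simp [addMat, Matrix.one_apply]

/-- `addMat` as a unit. -/
def addMatU (i0 : Fin m) (w : Fin m → ℤ) (hw : w i0 = 0) : (Matrix (Fin m) (Fin m) ℤ)ˣ :=
  ⟨addMat i0 w, addMat i0 (-w),
    by rw [addMat_mul_addMat i0 w hw]; simp [addMat_one],
    by rw [addMat_mul_addMat i0 (-w) (by simp [hw])]; simp [addMat_one]⟩

theorem mul_addMat (A : Matrix (Fin s) (Fin m) ℤ) (i0 : Fin m) (w : Fin m → ℤ) :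
    A * addMat i0 w = Matrix.of fun i j => A i j + A i i0 * w j := by
  ext i j
  simp only [addMat, Matrix.mul_apply, Matrix.of_apply, mul_add, mul_ite, mul_one, mul_zero,
    Finset.sum_add_distrib]
  rw [Finset.sum_ite_eq' Finset.univ j (fun x => A i x),
    Finset.sum_ite_eq' Finset.univ i0 (fun x => A i x * w j)]
  simp

theorem addMat_mul (A : Matrix (Fin m) (Fin l) ℤ) (i0 : Fin m) (w : Fin m → ℤ) :
    addMat i0 w * A = Matrix.of fun i j =>
      A i j + (if i = i0 then ∑ k, w k * A k j else 0) := by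
  ext i j
  simp only [addMat, Matrix.mul_apply, Matrix.of_apply, add_mul, ite_mul, one_mul, zero_mul,
    Finset.sum_add_distrib]
  rw [Finset.sum_ite_eq Finset.univ i (fun x => A x j)]
  simp only [Finset.mem_univ, if_true]
  by_cases hi : i = i0 <;> simp [hi]

/-- `spreadMat i0 w`: identity plus the column `w` placed at column `i0`. -/
def spreadMat (i0 : Fin m) (w : Fin m → ℤ) : Matrix (Fin m) (Fin m) ℤ :=
  Matrix.of fun i j => (if i = j then 1 else 0) + (if j = i0 then w i else 0)

theorem spreadMat_transpose (i0 : Fin m) (w : Fin m → ℤ) :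
    spreadMat i0 w = (addMat i0 w)ᵀ := by
  ext i j; simp [spreadMat, addMat, Matrix.transpose_apply, eq_comm]

theorem spreadMat_mul_spreadMat (i0 : Fin m) (w v : Fin m → ℤ) (hv : v i0 = 0) :
    spreadMat i0 w * spreadMat i0 v = spreadMat i0 (w + v) := by
  simp only [spreadMat_transpose]
  rw [← Matrix.transpose_mul, addMat_mul_addMat i0 v hv w, add_comm v w,
    ← spreadMat_transpose]

theorem spreadMat_one (i0 : Fin m) : spreadMat i0 0 = 1 := by
  ext i j; simp [spreadMat, Matrix.one_apply]

/-- `spreadMat` as a unit. -/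
def spreadMatU (i0 : Fin m) (w : Fin m → ℤ) (hw : w i0 = 0) : (Matrix (Fin m) (Fin m) ℤ)ˣ :=
  ⟨spreadMat i0 w, spreadMat i0 (-w),
    by rw [spreadMat_mul_spreadMat i0 w (-w) (by simp [hw])]; simp [spreadMat_one],
    by rw [spreadMat_mul_spreadMat i0 (-w) w hw]; simp [spreadMat_one]⟩

theorem spreadMat_mul (A : Matrix (Fin m) (Fin l) ℤ) (i0 : Fin m) (w : Fin m → ℤ) :
    spreadMat i0 w * A = Matrix.of fun i j => A i j + w i * A i0 j := by
  ext i j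
  simp only [spreadMat, Matrix.mul_apply, Matrix.of_apply, add_mul, ite_mul, one_mul, zero_mul,
    Finset.sum_add_distrib]
  rw [Finset.sum_ite_eq Finset.univ i (fun x => A x j),
    Finset.sum_ite_eq' Finset.univ i0 (fun x => w i * A x j)]
  simp

section equivs
variable {s l m : ℕ}

theorem snfEquiv_mul_addMat (A : Matrix (Fin s) (Fin l) ℤ) (j0 : Fin l) (v : Fin l → ℤ)
    (hv : v j0 = 0) : SNFEquiv A (Matrix.of fun i j => A i j + A i j0 * v j) :=
  ⟨1, addMatU j0 v hv, by rw [← mul_addMat]; simp [addMatU]⟩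

theorem snfEquiv_addMat_mul (A : Matrix (Fin s) (Fin l) ℤ) (i0 : Fin s) (w : Fin s → ℤ)
    (hw : w i0 = 0) :
    SNFEquiv A (Matrix.of fun i j => A i j + (if i = i0 then ∑ k, w k * A k j else 0)) :=
  ⟨addMatU i0 w hw, 1, by rw [← addMat_mul]; simp [addMatU]⟩

theorem snfEquiv_spreadMat_mul (A : Matrix (Fin s) (Fin l) ℤ) (i0 : Fin s) (w : Fin s → ℤ)
    (hw : w i0 = 0) :
    SNFEquiv A (Matrix.of fun i j => A i j + w i * A i0 j) :=
  ⟨spreadMatU i0 w hw, 1, by rw [← spreadMat_mul]; simp [spreadMatU]⟩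

theorem snfEquiv_negRow (A : Matrix (Fin s) (Fin l) ℤ) (i0 : Fin s) :
    SNFEquiv A (Matrix.of fun i j => (if i = i0 then -1 else 1) * A i j) := by
  have hd : (Matrix.diagonal fun i : Fin s => if i = i0 then (-1:ℤ) else 1) *
      (Matrix.diagonal fun i => if i = i0 then -1 else 1) = 1 := by
    rw [Matrix.diagonal_mul_diagonal]
    ext i j
    by_cases h : i = i0 <;> simp [h, Matrix.diagonal, Matrix.one_apply]
  refine ⟨⟨_, _, hd, hd⟩, 1, ?_⟩
  ext i j
  simp [Matrix.diagonal_mul]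

end equivs

section pivot
variable {s l : ℕ}

/-- The pivot lemma: any nonzero matrix is equivalent to one whose `(0,0)` entry is positive
and divides every entry, with the rest of row `0` and column `0` zero. -/
theorem pivot_lemma (s l : ℕ) (n : ℕ) :
    ∀ (A : Matrix (Fin (s+1)) (Fin (l+1)) ℤ) (i0 : Fin (s+1)) (j0 : Fin (l+1)),
      A i0 j0 ≠ 0 → (A i0 j0).natAbs ≤ n →
      ∃ B : Matrix (Fin (s+1)) (Fin (l+1)) ℤ, SNFEquiv A B ∧ 0 < B 0 0 ∧
        (∀ j, j ≠ 0 → B 0 j = 0) ∧ (∀ i, i ≠ 0 → B i 0 = 0) ∧ (∀ i j, B 0 0 ∣ B i j) := by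
  induction n using Nat.strong_induction_on with
  | _ n ih =>
  intro A i0 j0 h0 hn
  -- Step 1: move the nonzero entry to (0,0) and make it positive.
  set σ := Equiv.swap (0 : Fin (s+1)) i0
  set τ := Equiv.swap (0 : Fin (l+1)) j0
  set A1 := A.submatrix σ τ with hA1
  have e1 : SNFEquiv A A1 := snfEquiv_submatrix A σ τ
  have hA100 : A1 0 0 = A i0 j0 := by
    simp [hA1, σ, τ, Matrix.submatrix_apply, Equiv.swap_apply_left]
  set A2 := Matrix.of fun i j => (if i = (0 : Fin (s+1)) then (if 0 < A1 0 0 then 1 else -1) else 1) * A1 i j with hA2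
  have e2 : SNFEquiv A1 A2 := by
    by_cases h : 0 < A1 0 0
    · have : A2 = A1 := by ext i j; by_cases hi : i = 0 <;> simp [hA2, h, hi]
      rw [this]; exact SNFEquiv.refl A1
    · have := snfEquiv_negRow A1 (0 : Fin (s+1))
      convert this using 2
      ext i j; by_cases hi : i = 0 <;> simp [hA2, h, hi]
  have hd_pos : 0 < A2 0 0 := by
    rcases lt_trichotomy (A1 0 0) 0 with h | h | h
    · simp [hA2, not_lt.2 h.le, h.not_gt]; omega
    · rw [hA100] at h; exact absurd h h0
    · simp [hA2, h]
  have hd_abs : (A2 0 0).natAbs ≤ n := by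
    have : (A2 0 0).natAbs = (A1 0 0).natAbs := by
      by_cases h : 0 < A1 0 0 <;> simp [hA2, h]
    rw [this, hA100]; exact hn
  have eA2 : SNFEquiv A A2 := e1.trans e2
  clear_value A2
  clear e1 e2 hA100 hA1
  set d := A2 0 0 with hd
  -- helper: remainder step in row 0
  have key_row : ∀ (M : Matrix (Fin (s+1)) (Fin (l+1)) ℤ), SNFEquiv A M → M 0 0 = d →
      ∀ b : Fin (l+1), ¬ (d ∣ M 0 b) →
      ∃ B : Matrix (Fin (s+1)) (Fin (l+1)) ℤ, SNFEquiv A B ∧ 0 < B 0 0 ∧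
        (∀ j, j ≠ 0 → B 0 j = 0) ∧ (∀ i, i ≠ 0 → B i 0 = 0) ∧ (∀ i j, B 0 0 ∣ B i j) := by
    intro M hM hM00 b hb
    have hb0 : b ≠ 0 := by rintro rfl; rw [hM00] at hb; exact hb dvd_rfl
    set v : Fin (l+1) → ℤ := fun k => if k = b then -(M 0 b / d) else 0 with hv
    have hv0 : v 0 = 0 := by simp [hv, Ne.symm hb0]
    set M' := Matrix.of fun i j => M i j + M i 0 * v j with hM'
    have eM' : SNFEquiv A M' := hM.trans (snfEquiv_mul_addMat M 0 v hv0)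
    have hMb : M' 0 b = M 0 b % d := by
      simp only [hM', Matrix.of_apply, hv, if_pos rfl, if_true, hM00, Int.emod_def]; ring
    have hr0 : M 0 b % d ≠ 0 := fun h => hb (Int.dvd_of_emod_eq_zero h)
    have h1 : 0 ≤ M 0 b % d := Int.emod_nonneg _ (ne_of_gt hd_pos)
    have h2 : M 0 b % d < d := Int.emod_lt_of_pos _ hd_pos
    have hrlt : (M 0 b % d).natAbs < n := by omega
    obtain ⟨B, hB, rest⟩ := ih _ hrlt M' 0 b (by rw [hMb]; exact hr0) (by rw [hMb])
    exact ⟨B, eM'.trans hB, rest⟩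
  -- helper: remainder step in column 0
  have key_col : ∀ (M : Matrix (Fin (s+1)) (Fin (l+1)) ℤ), SNFEquiv A M → M 0 0 = d →
      ∀ a : Fin (s+1), ¬ (d ∣ M a 0) →
      ∃ B : Matrix (Fin (s+1)) (Fin (l+1)) ℤ, SNFEquiv A B ∧ 0 < B 0 0 ∧
        (∀ j, j ≠ 0 → B 0 j = 0) ∧ (∀ i, i ≠ 0 → B i 0 = 0) ∧ (∀ i j, B 0 0 ∣ B i j) := by
    intro M hM hM00 a ha
    have ha0 : a ≠ 0 := by rintro rfl; rw [hM00] at ha; exact ha dvd_rfl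
    set w : Fin (s+1) → ℤ := fun k => if k = a then -(M a 0 / d) else 0 with hw
    have hw0 : w 0 = 0 := by simp [hw, Ne.symm ha0]
    set M' := Matrix.of fun i j => M i j + w i * M 0 j with hM'
    have eM' : SNFEquiv A M' := hM.trans (snfEquiv_spreadMat_mul M 0 w hw0)
    have hMa : M' a 0 = M a 0 % d := by
      simp only [hM', Matrix.of_apply, hw, if_pos rfl, if_true, hM00, Int.emod_def]; ring
    have hr0 : M a 0 % d ≠ 0 := fun h => ha (Int.dvd_of_emod_eq_zero h)
    have h1 : 0 ≤ M a 0 % d := Int.emod_nonneg _ (ne_of_gt hd_pos)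
    have h2 : M a 0 % d < d := Int.emod_lt_of_pos _ hd_pos
    have hrlt : (M a 0 % d).natAbs < n := by omega
    obtain ⟨B, hB, rest⟩ := ih _ hrlt M' a 0 (by rw [hMa]; exact hr0) (by rw [hMa])
    exact ⟨B, eM'.trans hB, rest⟩
  by_cases hrow : ∀ j, d ∣ A2 0 j
  · by_cases hcol : ∀ i, d ∣ A2 i 0
    · -- clear row 0 and column 0
      set v : Fin (l+1) → ℤ := fun k => if k = 0 then 0 else -(A2 0 k / d) with hv
      have hv0 : v 0 = 0 := by simp [hv]
      set A3 := Matrix.of fun i j => A2 i j + A2 i 0 * v j with hA3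
      have eA3 : SNFEquiv A A3 := eA2.trans (snfEquiv_mul_addMat A2 0 v hv0)
      have hA300 : A3 0 0 = d := by simp [hA3, hv0, hd]
      have hA30j : ∀ j, j ≠ 0 → A3 0 j = 0 := by
        intro j hj
        simp only [hA3, Matrix.of_apply, hv, if_neg hj, ← hd, mul_neg]
        rw [Int.mul_ediv_cancel' (hrow j)]
        ring
      have hA3i0 : ∀ i, A3 i 0 = A2 i 0 := by
        intro i; simp [hA3, hv0]
      set w : Fin (s+1) → ℤ := fun k => if k = 0 then 0 else -(A2 k 0 / d) with hw
      have hw0 : w 0 = 0 := by simp [hw]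
      set A4 := Matrix.of fun i j => A3 i j + w i * A3 0 j with hA4
      have eA4 : SNFEquiv A A4 := eA3.trans (snfEquiv_spreadMat_mul A3 0 w hw0)
      have hA400 : A4 0 0 = d := by simp [hA4, hw0, hA300]
      have hA40j : ∀ j, j ≠ 0 → A4 0 j = 0 := by
        intro j hj; simp [hA4, hw0, hA30j j hj]
      have hA4i0 : ∀ i, i ≠ 0 → A4 i 0 = 0 := by
        intro i hi
        simp only [hA4, Matrix.of_apply, hw, if_neg hi, hA300, hA3i0, mul_neg, neg_mul]
        rw [Int.ediv_mul_cancel (hcol i)]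
        ring
      have hA4ij : ∀ i j, i ≠ 0 → j ≠ 0 → A4 i j = A3 i j := by
        intro i j hi hj
        simp [hA4, hA30j j hj]
      by_cases hall : ∀ i j, d ∣ A4 i j
      · exact ⟨A4, eA4, by rw [hA400]; exact hd_pos, hA40j, hA4i0,
          by rw [hA400]; exact hall⟩
      · push_neg at hall
        obtain ⟨a, b, hab⟩ := hall
        have ha0 : a ≠ 0 := by
          rintro rfl
          rcases eq_or_ne b 0 with rfl | hb
          · rw [hA400] at hab; exact hab dvd_rfl
          · rw [hA40j b hb] at hab; exact hab (dvd_zero d)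
        have hb0 : b ≠ 0 := by
          rintro rfl
          rw [hA4i0 a ha0] at hab; exact hab (dvd_zero d)
        set w' : Fin (s+1) → ℤ := fun k => if k = a then 1 else 0 with hw'
        have hw'0 : w' 0 = 0 := by simp [hw', Ne.symm ha0]
        set A5 := Matrix.of fun i j =>
          A4 i j + (if i = 0 then ∑ k, w' k * A4 k j else 0) with hA5
        have eA5 : SNFEquiv A A5 := eA4.trans (snfEquiv_addMat_mul A4 0 w' hw'0)
        have hsum : ∀ j, (∑ k, w' k * A4 k j) = A4 a j := by
          intro j
          rw [show (∑ k, w' k * A4 k j) = ∑ k, if k = a then A4 k j else 0 by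
            apply Finset.sum_congr rfl; intro k _; by_cases hk : k = a <;> simp [hw', hk]]
          simp
        have hA500 : A5 0 0 = d := by
          simp [hA5, hsum, hA4i0 a ha0, hA400]
        have hA50b : ¬ (d ∣ A5 0 b) := by
          have : A5 0 b = A4 a b := by
            simp [hA5, hsum, hA40j b hb0]
          rw [this]; exact hab
        exact key_row A5 eA5 hA500 b hA50b
    · push_neg at hcol
      obtain ⟨a, ha⟩ := hcol
      exact key_col A2 eA2 rfl a ha
  · push_neg at hrow
    obtain ⟨b, hb⟩ := hrow
    exact key_row A2 eA2 rfl b hb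

end pivot

section ext1
variable {s l m : ℕ}

/-- Extend a square matrix by adding a `1` in the upper-left corner. -/
def ext1 (M : Matrix (Fin m) (Fin m) ℤ) : Matrix (Fin (m+1)) (Fin (m+1)) ℤ :=
  Matrix.of fun i j =>
    Fin.cases (Fin.cases 1 (fun _ => 0) j) (fun i' => Fin.cases 0 (fun j' => M i' j') j) i

@[simp] theorem ext1_zero_zero (M : Matrix (Fin m) (Fin m) ℤ) : ext1 M 0 0 = 1 := rfl
@[simp] theorem ext1_zero_succ (M : Matrix (Fin m) (Fin m) ℤ) (j : Fin m) :
    ext1 M 0 j.succ = 0 := by simp [ext1]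
@[simp] theorem ext1_succ_zero (M : Matrix (Fin m) (Fin m) ℤ) (i : Fin m) :
    ext1 M i.succ 0 = 0 := by simp [ext1]
@[simp] theorem ext1_succ_succ (M : Matrix (Fin m) (Fin m) ℤ) (i j : Fin m) :
    ext1 M i.succ j.succ = M i j := by simp [ext1]

theorem ext1_mul_ext1 (M N : Matrix (Fin m) (Fin m) ℤ) :
    ext1 M * ext1 N = ext1 (M * N) := by
  ext i j
  induction i using Fin.cases with
  | zero =>
    induction j using Fin.cases with
    | zero => simp [Matrix.mul_apply, Fin.sum_univ_succ]
    | succ j => simp [Matrix.mul_apply, Fin.sum_univ_succ]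
  | succ i =>
    induction j using Fin.cases with
    | zero => simp [Matrix.mul_apply, Fin.sum_univ_succ]
    | succ j => simp [Matrix.mul_apply, Fin.sum_univ_succ]

theorem ext1_one : ext1 (1 : Matrix (Fin m) (Fin m) ℤ) = 1 := by
  ext i j
  induction i using Fin.cases with
  | zero =>
    induction j using Fin.cases with
    | zero => simp [Matrix.one_apply]
    | succ j => simp [Matrix.one_apply, (Fin.succ_ne_zero j).symm]
  | succ i =>
    induction j using Fin.cases with
    | zero => simp [Matrix.one_apply, Fin.succ_ne_zero i]
    | succ j => simp [Matrix.one_apply, Fin.succ_inj]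

/-- `ext1` of a unit. -/
def ext1U (U : (Matrix (Fin m) (Fin m) ℤ)ˣ) : (Matrix (Fin (m+1)) (Fin (m+1)) ℤ)ˣ :=
  ⟨ext1 U.val, ext1 U.inv,
    by rw [ext1_mul_ext1, U.val_inv, ext1_one],
    by rw [ext1_mul_ext1, U.inv_val, ext1_one]⟩

theorem ext1_mul_left (Q : Matrix (Fin s) (Fin s) ℤ) (B : Matrix (Fin (s+1)) (Fin (l+1)) ℤ) :
    ∀ j, (ext1 Q * B) 0 j = B 0 j ∧
      ∀ i : Fin s, (ext1 Q * B) i.succ j = ∑ k, Q i k * B k.succ j := by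
  intro j
  constructor
  · simp [Matrix.mul_apply, Fin.sum_univ_succ]
  · intro i
    simp [Matrix.mul_apply, Fin.sum_univ_succ]

theorem dvd_matrix_mul_mul {d : ℤ} (Q : Matrix (Fin s) (Fin s) ℤ)
    (B : Matrix (Fin s) (Fin l) ℤ) (P : Matrix (Fin l) (Fin l) ℤ)
    (h : ∀ i j, d ∣ B i j) : ∀ i j, d ∣ (Q * B * P) i j := by
  have h1 : ∀ i j, d ∣ (Q * B) i j := by
    intro i j
    rw [Matrix.mul_apply]
    exact Finset.dvd_sum fun k _ => (h k j).mul_left _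
  intro i j
  rw [Matrix.mul_apply]
  exact Finset.dvd_sum fun k _ => (h1 i k).mul_right _

end ext1

/-- Main SNF existence result for integer matrices. -/
theorem snf_main (s : ℕ) : ∀ (l : ℕ) (A : Matrix (Fin s) (Fin l) ℤ),
    ∃ B, SNFEquiv A B ∧ IsSNF B := by
  induction s with
  | zero =>
    intro l A
    exact ⟨A, SNFEquiv.refl A, fun i _ _ => i.elim0, 0, fun i => i.elim0, fun i => i.elim0⟩
  | succ s ihs =>
    intro l A
    match l with
    | 0 =>
      exact ⟨A, SNFEquiv.refl A, fun _ j _ => j.elim0, 0, fun _ j => j.elim0,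
        fun _ _ j => j.elim0⟩
    | l + 1 =>
      by_cases hA : A = 0
      · subst hA
        refine ⟨0, SNFEquiv.refl 0, fun _ _ _ => rfl, 0, fun i j _ => ⟨fun h => by omega,
          fun _ => rfl⟩, fun _ _ _ _ _ _ _ => dvd_refl _⟩
      · obtain ⟨i0, j0, h00⟩ : ∃ i j, A i j ≠ 0 := by
          by_contra h
          push_neg at h
          exact hA (by ext i j; simp [h])
        obtain ⟨B, eB, hBpos, hBrow, hBcol, hBdvd⟩ :=
          pivot_lemma s l (A i0 j0).natAbs A i0 j0 h00 le_rfl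
        set B' := B.submatrix Fin.succ Fin.succ with hB'
        obtain ⟨C, eC, hCdiag, rC, hCr, hCdvd⟩ := ihs l B'
        obtain ⟨Q', P', hCeq⟩ := eC
        set d := B 0 0 with hd
        have hdC : ∀ i j, d ∣ C i j := by
          rw [hCeq]
          exact dvd_matrix_mul_mul _ _ _ (fun i j => hBdvd i.succ j.succ)
        set D := Matrix.of (fun i j =>
          Fin.cases (Fin.cases d (fun _ => 0) j) (fun i' => Fin.cases 0 (fun j' => C i' j') j) i :
          Fin (s+1) → Fin (l+1) → ℤ) with hD
        have hD00 : D 0 0 = d := rfl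
        have hD0s : ∀ j : Fin l, D 0 j.succ = 0 := by intro j; simp [hD]
        have hDs0 : ∀ i : Fin s, D i.succ 0 = 0 := by intro i; simp [hD]
        have hDss : ∀ (i : Fin s) (j : Fin l), D i.succ j.succ = C i j := by
          intro i j; simp [hD]
        have glue : D = ext1 (Q' : Matrix (Fin s) (Fin s) ℤ) * B *
            ext1 (P' : Matrix (Fin l) (Fin l) ℤ) := by
          ext i j
          induction i using Fin.cases with
          | zero =>
            induction j using Fin.cases with
            | zero =>
              rw [hD00, Matrix.mul_apply, Fin.sum_univ_succ]
              simp [Matrix.mul_apply, Fin.sum_univ_succ, hd]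
            | succ j =>
              rw [hD0s, Matrix.mul_apply, Fin.sum_univ_succ]
              have : ∀ k : Fin l, B 0 k.succ = 0 := fun k => hBrow k.succ (Fin.succ_ne_zero k)
              simp [Matrix.mul_apply, Fin.sum_univ_succ, this]
          | succ i =>
            induction j using Fin.cases with
            | zero =>
              rw [hDs0, Matrix.mul_apply, Fin.sum_univ_succ]
              have : ∀ k : Fin s, B k.succ 0 = 0 := fun k => hBcol k.succ (Fin.succ_ne_zero k)
              simp [Matrix.mul_apply, Fin.sum_univ_succ, this]
            | succ j =>
              rw [hDss, hCeq]
              simp only [Matrix.mul_apply, Fin.sum_univ_succ, ext1_zero_zero, ext1_zero_succ,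
                ext1_succ_zero, ext1_succ_succ, hB', Matrix.submatrix_apply, mul_zero, zero_mul,
                mul_one, one_mul, add_zero, zero_add]
        have eD : SNFEquiv A D := (eB.trans ⟨ext1U Q', ext1U P', glue⟩)
        refine ⟨D, eD, ?_, rC + 1, ?_, ?_⟩
        · -- diagonal
          intro i j hij
          induction i using Fin.cases with
          | zero =>
            induction j using Fin.cases with
            | zero => exact absurd rfl hij
            | succ j => exact hD0s j
          | succ i =>
            induction j using Fin.cases with
            | zero => exact hDs0 i
            | succ j =>
              rw [hDss]
              exact hCdiag i j (by simpa [Fin.val_succ] using hij)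
        · -- positivity / vanishing
          intro i j hij
          induction i using Fin.cases with
          | zero =>
            induction j using Fin.cases with
            | zero => exact ⟨fun _ => hBpos, fun h => by simp at h⟩
            | succ j => simp [Fin.val_succ] at hij
          | succ i =>
            induction j using Fin.cases with
            | zero => simp [Fin.val_succ] at hij
            | succ j =>
              have hij' : (i : ℕ) = (j : ℕ) := by simpa [Fin.val_succ] using hij
              obtain ⟨h1, h2⟩ := hCr i j hij'
              rw [hDss]
              exact ⟨fun h => h1 (by simpa [Fin.val_succ] using h),
                fun h => h2 (by simp only [Fin.val_succ] at h; omega)⟩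
        · -- divisibility chain
          intro i i' j j' hij hij' hchain
          induction i using Fin.cases with
          | zero =>
            induction j using Fin.cases with
            | zero =>
              induction i' using Fin.cases with
              | zero => simp at hchain
              | succ a =>
                induction j' using Fin.cases with
                | zero => simp [Fin.val_succ] at hij'
                | succ b =>
                  rw [hD00, hDss]
                  exact hdC a b
            | succ j => simp [Fin.val_succ] at hij
          | succ a =>
            induction j using Fin.cases with
            | zero => simp [Fin.val_succ] at hij
            | succ b =>
              induction i' using Fin.cases with
              | zero => simp [Fin.val_succ] at hchain
              | succ a' =>
                induction j' using Fin.cases with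
                | zero => simp [Fin.val_succ] at hij'
                | succ b' =>
                  rw [hDss, hDss]
                  exact hCdvd a a' b b' (by simpa [Fin.val_succ] using hij)
                    (by simpa [Fin.val_succ] using hij')
                    (by simp only [Fin.val_succ] at hchain; omega)

section bord
variable {s l m : ℕ}

/-- Extend a square matrix to one fixing `𝟙` with first row `(1,0,…,0)`. -/
def bord (M : Matrix (Fin m) (Fin m) ℤ) : Matrix (Fin (m+1)) (Fin (m+1)) ℤ :=
  Matrix.of fun i j =>
    Fin.cases (Fin.cases 1 (fun _ => 0) j)
      (fun i' => Fin.cases (1 - ∑ k, M i' k) (fun j' => M i' j') j) i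

@[simp] theorem bord_zero_zero (M : Matrix (Fin m) (Fin m) ℤ) : bord M 0 0 = 1 := rfl
@[simp] theorem bord_zero_succ (M : Matrix (Fin m) (Fin m) ℤ) (j : Fin m) :
    bord M 0 j.succ = 0 := by simp [bord]
@[simp] theorem bord_succ_zero (M : Matrix (Fin m) (Fin m) ℤ) (i : Fin m) :
    bord M i.succ 0 = 1 - ∑ k, M i k := by simp [bord]
@[simp] theorem bord_succ_succ (M : Matrix (Fin m) (Fin m) ℤ) (i j : Fin m) :
    bord M i.succ j.succ = M i j := by simp [bord]

theorem bord_rowsum (M : Matrix (Fin m) (Fin m) ℤ) (i : Fin (m+1)) :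
    ∑ j, bord M i j = 1 := by
  induction i using Fin.cases with
  | zero => simp [Fin.sum_univ_succ]
  | succ i => simp [Fin.sum_univ_succ]

theorem bord_mul_bord {M N : Matrix (Fin m) (Fin m) ℤ} (hMN : M * N = 1) :
    bord M * bord N = 1 := by
  have key : ∀ i : Fin m, ∑ k, ∑ j, M i k * N k j = 1 := by
    intro i
    have h1 : ∑ j, (M * N) i j = 1 := by rw [hMN]; simp [Matrix.one_apply]
    rw [← h1]
    simp only [Matrix.mul_apply]
    rw [Finset.sum_comm]
  ext i j
  induction i using Fin.cases with
  | zero =>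
    induction j using Fin.cases with
    | zero => simp [Matrix.mul_apply, Fin.sum_univ_succ, Matrix.one_apply]
    | succ j =>
      simp [Matrix.mul_apply, Fin.sum_univ_succ, Matrix.one_apply,
        (Fin.succ_ne_zero j).symm]
  | succ i =>
    induction j using Fin.cases with
    | zero =>
      simp only [Matrix.mul_apply, Fin.sum_univ_succ, bord_zero_zero, bord_zero_succ,
        bord_succ_zero, bord_succ_succ, mul_one, mul_zero, zero_add, add_zero,
        Matrix.one_apply, if_neg (Fin.succ_ne_zero i)]
      simp only [mul_sub, mul_one, Finset.sum_sub_distrib, Finset.mul_sum]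
      rw [key i]
      ring
    | succ j =>
      have h1 := congrFun (congrFun hMN i) j
      simp only [Matrix.mul_apply] at h1
      simp only [Matrix.mul_apply, Fin.sum_univ_succ, bord_zero_zero, bord_zero_succ,
        bord_succ_zero, bord_succ_succ, mul_zero, zero_add, h1]
      simp [Matrix.one_apply, Fin.succ_inj]

theorem eraseFirstCol_apply_succ (M : Matrix (Fin s) (Fin (l+1)) ℤ) (i : Fin s) (j : Fin l) :
    eraseFirstCol M i j = M i j.succ := rfl

end bord

/-- Every integer matrix all of whose rows sum to zero can be brought to homogeneous Smith
normal form by `Q ∈ GL_s(ℤ)` and `P ∈ GL_l(ℤ)` with `P·𝟙 = 𝟙` and first row of `P` equal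
to `(1,0,…,0)`. -/
theorem hsnf_exists (s l : ℕ) (hs : 0 < s) (hl : 0 < l)
    (X : Matrix (Fin s) (Fin l) ℤ) (hX : X *ᵥ 1 = 0) :
    ∃ (Q : Matrix.GeneralLinearGroup (Fin s) ℤ) (P : Matrix.GeneralLinearGroup (Fin l) ℤ),
      (P : Matrix (Fin l) (Fin l) ℤ) *ᵥ 1 = 1 ∧
      (∀ j : Fin l, (P : Matrix (Fin l) (Fin l) ℤ) ⟨0, hl⟩ j =
        if (j : ℕ) = 0 then 1 else 0) ∧
      IsHSNF ((Q : Matrix (Fin s) (Fin s) ℤ) * X *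
        ((P⁻¹ : Matrix.GeneralLinearGroup (Fin l) ℤ) : Matrix (Fin l) (Fin l) ℤ)) := by
  obtain ⟨l', rfl⟩ : ∃ l', l = l' + 1 := ⟨l - 1, by omega⟩
  obtain ⟨C, ⟨Q, P, hCeq⟩, hC⟩ := snf_main s l' (eraseFirstCol X)
  refine ⟨Q, ⟨bord P.inv, bord P.val, bord_mul_bord P.inv_val, bord_mul_bord P.val_inv⟩,
    ?_, ?_, ?_, ?_⟩
  · ext i
    simp only [Matrix.mulVec, dotProduct, Pi.one_apply, mul_one]
    exact bord_rowsum _ i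
  · intro j
    induction j using Fin.cases with
    | zero => simp
    | succ j => simp [Fin.val_succ, (Fin.succ_ne_zero j)]
  · show (Q.val * X * bord P.val) *ᵥ 1 = 0
    have h1 : bord P.val *ᵥ (1 : Fin (l'+1) → ℤ) = 1 := by
      ext i
      simp only [Matrix.mulVec, dotProduct, Pi.one_apply, mul_one]
      exact bord_rowsum _ i
    rw [← Matrix.mulVec_mulVec, ← Matrix.mulVec_mulVec, h1, hX, Matrix.mulVec_zero]
  · show IsSNF (eraseFirstCol (Q.val * X * bord P.val))
    have hE : eraseFirstCol ((Q : Matrix (Fin s) (Fin s) ℤ) * X * bord P.val) = C := by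
      rw [hCeq]
      ext i j
      rw [eraseFirstCol_apply_succ]
      simp only [Matrix.mul_apply, Fin.sum_univ_succ, bord_zero_succ, bord_succ_succ,
        mul_zero, zero_add, eraseFirstCol_apply_succ]
    rw [hE]
    exact hC
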